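/- Let R_1, …, R_{n+1} be real-valued random variables on a probability space whose joint distribution is exchangeable, i.e., invariant under every permutation of the indices {1, …, n+1}. Let 0 < α < 1 satisfy ⌈(1−α)(n+1)⌉ ≤ n, and let r̂ = R_{(⌈(1−α)(n+1)⌉)} be the ⌈(1−α)(n+1)⌉-th order statistic of the first n variables R_1, …, R_n. Then Pr(R_{n+1} ≤ r̂) ≥ 1 − α. -/

import Mathlib

open MeasureTheory

/-- The `k`-th order statistic (1-based, counted with multiplicity) of the values
`v 0, …, v (m-1)`: the `k`-th smallest element of the list sorted in nondecreasing
order, with junk value `0` when `k` is out of range. -/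
noncomputable def orderStat {m : ℕ} (v : Fin m → ℝ) (k : ℕ) : ℝ :=
  (List.insertionSort (· ≤ ·) (List.ofFn v)).getD (k - 1) 0

open Finset
/-- orderStat via Tuple.sort -/
lemma orderStat_eq_sort {m : ℕ} (v : Fin m → ℝ) (k : ℕ) (h1 : 1 ≤ k) (h2 : k ≤ m) :
    orderStat v k = (v ∘ Tuple.sort v) ⟨k - 1, by omega⟩ := by
  have hperm : List.insertionSort (· ≤ ·) (List.ofFn v) = List.ofFn (v ∘ Tuple.sort v) := by
    exact List.Perm.eq_of_pairwise'
      (List.pairwise_insertionSort _ _) ((Tuple.monotone_sort v).sortedLE_ofFn.pairwise)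
      ((List.perm_insertionSort _ _).trans (Equiv.Perm.ofFn_comp_perm (Tuple.sort v) v).symm)
  rw [orderStat, hperm]
  rw [List.getD_eq_getElem?_getD]
  simp [List.getElem?_ofFn, show k - 1 < m by omega]

/-- index lemma for monotone tuples -/
lemma card_lt_of_monotone {m : ℕ} {w : Fin m → ℝ} (hw : Monotone w) (j : Fin m) (x : ℝ)
    (hx : x ≤ w j) : (univ.filter fun i => w i < x).card ≤ j := by
  have hsub : (univ.filter fun i => w i < x) ⊆ Finset.Iio j := by
    intro i hi
    simp only [mem_filter] at hi
    rw [Finset.mem_Iio]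
    by_contra hc
    exact absurd (hi.2.trans_le (hx.trans (hw (le_of_not_gt hc)))) (lt_irrefl _)
  calc (univ.filter fun i => w i < x).card ≤ (Finset.Iio j).card := Finset.card_le_card hsub
    _ = j := by simp

lemma le_card_of_monotone {m : ℕ} {w : Fin m → ℝ} (hw : Monotone w) (j : Fin m) (x : ℝ)
    (hx : w j < x) : (j : ℕ) + 1 ≤ (univ.filter fun i => w i < x).card := by
  have hsub : Finset.Iic j ⊆ (univ.filter fun i => w i < x) := by
    intro i hi
    rw [Finset.mem_Iic] at hi
    simp only [mem_filter, mem_univ, true_and]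
    exact (hw hi).trans_lt hx
  calc (j : ℕ) + 1 = (Finset.Iic j).card := by simp
    _ ≤ _ := Finset.card_le_card hsub

lemma card_filter_perm {m : ℕ} (σ : Equiv.Perm (Fin m)) (p : Fin m → Prop) [DecidablePred p] :
    (univ.filter fun i => p (σ i)).card = (univ.filter p).card :=
  Finset.card_equiv σ (by simp)

/-- characterization of x ≤ orderStat -/
lemma le_orderStat_iff {m : ℕ} (v : Fin m → ℝ) (k : ℕ) (h1 : 1 ≤ k) (h2 : k ≤ m) (x : ℝ) :
    x ≤ orderStat v k ↔ (univ.filter fun i => v i < x).card < k := by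
  rw [orderStat_eq_sort v k h1 h2]
  have hmono := Tuple.monotone_sort v
  have hcard : (univ.filter fun i => (v ∘ Tuple.sort v) i < x).card
      = (univ.filter fun i => v i < x).card :=
    card_filter_perm (Tuple.sort v) (fun i => v i < x)
  constructor
  · intro h
    have := card_lt_of_monotone hmono ⟨k - 1, by omega⟩ x h
    rw [hcard] at this
    simp only at this
    omega
  · intro h
    by_contra hc
    push_neg at hc
    have := le_card_of_monotone hmono ⟨k - 1, by omega⟩ x hc
    rw [hcard] at this
    simp only at this
    omega

/-- counting lemma: at least k indices have strict-rank < k -/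
lemma count_low_rank {m : ℕ} (v : Fin m → ℝ) (k : ℕ) (h1 : 1 ≤ k) (h2 : k ≤ m) :
    k ≤ (univ.filter fun j => (univ.filter fun i => v i < v j).card < k).card := by
  set σ := Tuple.sort v
  have hmono := Tuple.monotone_sort v
  set t := v (σ ⟨k - 1, by omega⟩) with ht
  have hsub : (univ.filter fun j => v j ≤ t) ⊆
      (univ.filter fun j => (univ.filter fun i => v i < v j).card < k) := by
    intro j hj
    simp only [mem_filter, mem_univ, true_and] at hj ⊢
    have hsub2 : (univ.filter fun i => v i < v j) ⊆ (univ.filter fun i => v i < t) := by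
      intro i hi
      simp only [mem_filter, mem_univ, true_and] at hi ⊢
      exact hi.trans_le hj
    have h3 : (univ.filter fun i => v i < t).card ≤ k - 1 := by
      have := card_lt_of_monotone hmono ⟨k - 1, by omega⟩ t le_rfl
      rw [← card_filter_perm σ (fun i => v i < t)]
      simpa using this
    have := Finset.card_le_card hsub2
    omega
  have hlow : k ≤ (univ.filter fun j => v j ≤ t).card := by
    rw [← card_filter_perm σ (fun j => v j ≤ t)]
    have hsub3 : Finset.Iic (⟨k - 1, by omega⟩ : Fin m) ⊆ (univ.filter fun j => v (σ j) ≤ t) := by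
      intro i hi
      rw [Finset.mem_Iic] at hi
      simp only [mem_filter, mem_univ, true_and]
      exact hmono hi
    calc k = (Finset.Iic (⟨k - 1, by omega⟩ : Fin m)).card := by simp; omega
      _ ≤ _ := Finset.card_le_card hsub3
  exact hlow.trans (Finset.card_le_card hsub)

/-- If `R 1, …, R (n+1)` are real random variables whose joint distribution is
exchangeable, `0 < α < 1` satisfies `⌈(1−α)(n+1)⌉ ≤ n`, and `r̂` is the
`⌈(1−α)(n+1)⌉`-th order statistic of the first `n` variables, then
`Pr(R (n+1) ≤ r̂) ≥ 1 − α`. -/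
theorem prob_last_le_calibrated_threshold {Ω : Type*} [MeasurableSpace Ω]
    (P : Measure Ω) [IsProbabilityMeasure P]
    (n : ℕ) (R : Fin (n + 1) → Ω → ℝ) (hmeas : ∀ i, Measurable (R i))
    (hexch : ∀ π : Equiv.Perm (Fin (n + 1)),
      Measure.map (fun ω => fun i => R (π i) ω) P =
        Measure.map (fun ω => fun i => R i ω) P)
    (α : ℝ) (hα0 : 0 < α) (hα1 : α < 1)
    (hceil : ⌈(1 - α) * ((n : ℝ) + 1)⌉₊ ≤ n) :
    ENNReal.ofReal (1 - α) ≤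
      P {ω | R (Fin.last n) ω ≤
        orderStat (fun i : Fin n => R i.castSucc ω) ⌈(1 - α) * ((n : ℝ) + 1)⌉₊} := by
  classical
  set k := ⌈(1 - α) * ((n : ℝ) + 1)⌉₊ with hk
  have hk1 : 1 ≤ k := by
    rw [hk]
    rw [Nat.one_le_iff_ne_zero, ← Nat.pos_iff_ne_zero, Nat.ceil_pos]
    have h1 : (0:ℝ) < 1 - α := by linarith
    positivity
  -- the events
  set S : Fin (n + 1) → Set (Fin (n + 1) → ℝ) :=
    fun j => {f | (univ.filter fun i => f i < f j).card < k} with hS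
  have hSmeas : ∀ j, MeasurableSet (S j) := by
    intro j
    have hg : Measurable (fun f : Fin (n + 1) → ℝ =>
        (univ.filter fun i => f i < f j).card) := by
      simp only [Finset.card_filter]
      apply Finset.measurable_sum
      intro i _
      exact Measurable.ite (measurableSet_lt (measurable_pi_apply i) (measurable_pi_apply j))
        measurable_const measurable_const
    exact hg (MeasurableSet.of_discrete (s := Set.Iio k))
  set E : Fin (n + 1) → Set Ω := fun j => (fun ω => fun i => R i ω) ⁻¹' S j with hE
  have hRmap : Measurable (fun ω => fun i : Fin (n + 1) => R i ω) :=
    measurable_pi_lambda _ hmeas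
  have hEmeas : ∀ j, MeasurableSet (E j) := fun j => hRmap (hSmeas j)
  have hEmem : ∀ j ω, ω ∈ E j ↔ (univ.filter fun i => R i ω < R j ω).card < k := by
    intro j ω; rfl
  -- all events have the same probability
  have hPE : ∀ j, P (E j) = P (E (Fin.last n)) := by
    intro j
    set π := Equiv.swap j (Fin.last n) with hπ
    have h1 : Measurable (fun ω => fun i : Fin (n + 1) => R (π i) ω) :=
      measurable_pi_lambda _ (fun i => hmeas _)
    have hpre : (fun ω => fun i : Fin (n + 1) => R (π i) ω) ⁻¹' S (Fin.last n) = E j := by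
      ext ω
      simp only [hS, hE, Set.mem_preimage, Set.mem_setOf_eq]
      have h2 : π (Fin.last n) = j := Equiv.swap_apply_right _ _
      have h3 := card_filter_perm π (fun i => R i ω < R j ω)
      simp only [h2]
      omega
    have := hexch π
    calc P (E j) = Measure.map (fun ω => fun i => R (π i) ω) P (S (Fin.last n)) := by
          rw [Measure.map_apply h1 (hSmeas _), hpre]
      _ = Measure.map (fun ω => fun i => R i ω) P (S (Fin.last n)) := by rw [this]
      _ = P (E (Fin.last n)) := by rw [Measure.map_apply hRmap (hSmeas _)]
  -- pointwise counting bound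
  have hpoint : ∀ ω, (k : ENNReal) ≤ ∑ j : Fin (n + 1), (E j).indicator 1 ω := by
    intro ω
    have hc := count_low_rank (fun i => R i ω) k hk1 (by omega)
    calc (k : ENNReal)
        ≤ ((univ.filter fun j : Fin (n + 1) =>
            (univ.filter fun i => R i ω < R j ω).card < k).card : ENNReal) := by
          exact_mod_cast hc
      _ = ∑ j : Fin (n + 1), (E j).indicator 1 ω := by
          rw [Finset.card_filter]
          push_cast
          apply Finset.sum_congr rfl
          intro j _
          by_cases h : ω ∈ E j
          · rw [if_pos ((hEmem j ω).1 h), Set.indicator_of_mem h]; rfl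
          · rw [if_neg (fun hh => h ((hEmem j ω).2 hh)), Set.indicator_of_notMem h]
  -- integrate
  have hsum : (k : ENNReal) ≤ ∑ j : Fin (n + 1), P (E j) := by
    have h1 : ∑ j : Fin (n + 1), P (E j)
        = ∫⁻ ω, ∑ j : Fin (n + 1), (E j).indicator 1 ω ∂P := by
      rw [lintegral_finset_sum _ (fun j _ => measurable_one.indicator (hEmeas j))]
      exact Finset.sum_congr rfl fun j _ => (lintegral_indicator_one (hEmeas j)).symm
    rw [h1]
    calc (k : ENNReal) = ∫⁻ _, (k : ENNReal) ∂P := by simp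
      _ ≤ _ := lintegral_mono hpoint
  have hsum2 : (k : ENNReal) ≤ ((n : ENNReal) + 1) * P (E (Fin.last n)) := by
    calc (k : ENNReal) ≤ ∑ j : Fin (n + 1), P (E j) := hsum
      _ = ∑ _j : Fin (n + 1), P (E (Fin.last n)) := Finset.sum_congr rfl fun j _ => hPE j
      _ = ((n : ENNReal) + 1) * P (E (Fin.last n)) := by
          rw [Finset.sum_const, Finset.card_univ, Fintype.card_fin, nsmul_eq_mul]
          push_cast; ring_nf
  -- identify the target set with E (Fin.last n)
  have hset : {ω | R (Fin.last n) ω ≤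
      orderStat (fun i : Fin n => R i.castSucc ω) k} = E (Fin.last n) := by
    ext ω
    rw [Set.mem_setOf_eq, le_orderStat_iff _ k hk1 hceil, hEmem]
    have : (univ.filter fun i : Fin (n + 1) => R i ω < R (Fin.last n) ω).card
        = (univ.filter fun i : Fin n => R i.castSucc ω < R (Fin.last n) ω).card := by
      rw [Finset.card_filter, Finset.card_filter, Fin.sum_univ_castSucc]
      simp
    rw [this]
  rw [hset]
  -- final arithmetic
  have hne0 : ((n : ENNReal) + 1) ≠ 0 := by simp
  have hnetop : ((n : ENNReal) + 1) ≠ ⊤ := by simp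
  rw [← ENNReal.mul_le_mul_iff_right hne0 hnetop]
  refine le_trans ?_ hsum2
  have h5 : ((n : ENNReal) + 1) = ENNReal.ofReal ((n : ℝ) + 1) := by
    rw [ENNReal.ofReal_add (by positivity) zero_le_one]
    simp
  rw [h5, ← ENNReal.ofReal_mul (by positivity), mul_comm]
  calc ENNReal.ofReal ((1 - α) * ((n : ℝ) + 1)) ≤ ENNReal.ofReal (k : ℝ) :=
        ENNReal.ofReal_le_ofReal (Nat.le_ceil _)
    _ = (k : ENNReal) := ENNReal.ofReal_natCast k
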